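/- Suppose f : R^n → R is C^2 with L-Lipschitz Hessian. Let d^1,…,d^p be linearly independent nonzero vectors in R^n, S = [d^1 ⋯ d^p], and define the diagonal-style generalized simplex Hessian H := (Sᵀ)† Diag(c) Sᵀ where c_i := (f(x^0+d^i) + f(x^0−d^i) − 2f(x^0)) / ||d^i||². Then for each i, |(d^i/||d^i||)ᵀ (H − ∇²f(x^0)) (d^i/||d^i||)| ≤ (L/3) Δ_S, where Δ_S = max_j ||d^j||. -/

import Mathlib

open Matrix
open scoped RealInnerProductSpace

noncomputable section

abbrev Eu (n : ℕ) := EuclideanSpace ℝ (Fin n)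

def IsMP {a b : ℕ} (A : Matrix (Fin a) (Fin b) ℝ) (A' : Matrix (Fin b) (Fin a) ℝ) : Prop :=
  A * A' * A = A ∧ A' * A * A' = A' ∧ (A * A')ᵀ = A * A' ∧ (A' * A)ᵀ = A' * A

def euclNorm {k : ℕ} (v : Fin k → ℝ) : ℝ := Real.sqrt (∑ i, v i ^ 2)

def spNorm {a b : ℕ} (A : Matrix (Fin a) (Fin b) ℝ) : ℝ :=
  ⨆ v : {v : Fin b → ℝ // euclNorm v ≤ 1}, euclNorm (A.mulVec v.1)

def frobNorm {a b : ℕ} (A : Matrix (Fin a) (Fin b) ℝ) : ℝ :=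
  Real.sqrt (∑ i, ∑ j, A i j ^ 2)

def mat1Norm {a b : ℕ} (A : Matrix (Fin a) (Fin b) ℝ) : ℝ := ⨆ j, ∑ i, |A i j|

lemma euclNorm_nonneg {k : ℕ} (v : Fin k → ℝ) : 0 ≤ euclNorm v := Real.sqrt_nonneg _

lemma euclNorm_eq_norm {k : ℕ} (v : Eu k) : euclNorm (fun i => v i) = ‖v‖ := by
  rw [EuclideanSpace.norm_eq, euclNorm]
  congr 1; exact Finset.sum_congr rfl fun i _ => (sq_abs _).symm

lemma euclNorm_zero {k : ℕ} : euclNorm (0 : Fin k → ℝ) = 0 := by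
  simp [euclNorm]

lemma euclNorm_smul {k : ℕ} (c : ℝ) (v : Fin k → ℝ) :
    euclNorm (c • v) = |c| * euclNorm v := by
  simp only [euclNorm, Pi.smul_apply, smul_eq_mul, mul_pow, ← Finset.mul_sum]
  rw [Real.sqrt_mul (sq_nonneg c), Real.sqrt_sq_eq_abs]

lemma euclNorm_eq_zero {k : ℕ} {v : Fin k → ℝ} (h : euclNorm v = 0) : v = 0 := by
  have h2 : ∑ i, v i ^ 2 = 0 :=
    le_antisymm (Real.sqrt_eq_zero'.mp h) (Finset.sum_nonneg fun i _ => sq_nonneg _)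
  funext i
  have := (Finset.sum_eq_zero_iff_of_nonneg (fun i _ => sq_nonneg (v i))).mp h2 i (Finset.mem_univ i)
  exact pow_eq_zero_iff (by norm_num) |>.mp this

-- Cauchy-Schwarz for dot product
lemma abs_dotProduct_le {k : ℕ} (v w : Fin k → ℝ) :
    |v ⬝ᵥ w| ≤ euclNorm v * euclNorm w := by
  have h := Finset.sum_mul_sq_le_sq_mul_sq Finset.univ v w
  have : |v ⬝ᵥ w| = Real.sqrt ((v ⬝ᵥ w) ^ 2) := (Real.sqrt_sq_eq_abs _).symm
  rw [this, euclNorm, euclNorm, ← Real.sqrt_mul (Finset.sum_nonneg fun i _ => sq_nonneg _)]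
  exact Real.sqrt_le_sqrt h

lemma mulVec_bdd {a b : ℕ} (A : Matrix (Fin a) (Fin b) ℝ) :
    BddAbove (Set.range fun v : {v : Fin b → ℝ // euclNorm v ≤ 1} =>
      euclNorm (A.mulVec v.1)) := by
  refine ⟨Real.sqrt (∑ i, ∑ j, A i j ^ 2), ?_⟩
  rintro x ⟨⟨v, hv⟩, rfl⟩
  dsimp only
  rw [euclNorm]
  apply Real.sqrt_le_sqrt
  apply Finset.sum_le_sum
  intro i _
  have hmv : A.mulVec v i = ∑ j, A i j * v j := rfl
  rw [hmv]
  calc (∑ j, A i j * v j) ^ 2 ≤ (∑ j, A i j ^ 2) * (∑ j, v j ^ 2) :=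
        Finset.sum_mul_sq_le_sq_mul_sq Finset.univ _ _
    _ ≤ (∑ j, A i j ^ 2) * 1 := by
        apply mul_le_mul_of_nonneg_left _ (Finset.sum_nonneg fun j _ => sq_nonneg _)
        have := hv
        rw [euclNorm] at this
        nlinarith [Real.sq_sqrt (Finset.sum_nonneg (fun j (_ : j ∈ Finset.univ) => sq_nonneg (v j))), Real.sqrt_nonneg (∑ j, v j ^ 2)]
    _ = ∑ j, A i j ^ 2 := mul_one _

lemma spNorm_nonneg {a b : ℕ} (A : Matrix (Fin a) (Fin b) ℝ) : 0 ≤ spNorm A := by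
  have : euclNorm (A.mulVec (0 : Fin b → ℝ)) ≤ spNorm A :=
    le_ciSup (mulVec_bdd A) ⟨0, by simp [euclNorm_zero]⟩
  calc (0:ℝ) ≤ euclNorm (A.mulVec 0) := euclNorm_nonneg _
    _ ≤ _ := this

lemma euclNorm_mulVec_le {a b : ℕ} (A : Matrix (Fin a) (Fin b) ℝ) (v : Fin b → ℝ) :
    euclNorm (A.mulVec v) ≤ spNorm A * euclNorm v := by
  rcases eq_or_lt_of_le (euclNorm_nonneg v) with h0 | h0
  · rw [euclNorm_eq_zero h0.symm]
    simp [Matrix.mulVec_zero, euclNorm_zero, ← h0]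
  · set cc := euclNorm v with hcc
    have hu : euclNorm (cc⁻¹ • v) = 1 := by
      rw [euclNorm_smul, abs_of_pos (inv_pos.mpr h0), inv_mul_cancel₀ h0.ne']
    have key : euclNorm (A.mulVec (cc⁻¹ • v)) ≤ spNorm A :=
      le_ciSup (mulVec_bdd A) ⟨cc⁻¹ • v, hu.le⟩
    rw [Matrix.mulVec_smul, euclNorm_smul, abs_of_pos (inv_pos.mpr h0)] at key
    calc euclNorm (A.mulVec v) = cc * (cc⁻¹ * euclNorm (A.mulVec v)) := by
          field_simp
      _ ≤ cc * spNorm A := by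
          exact mul_le_mul_of_nonneg_left key h0.le
      _ = spNorm A * cc := mul_comm _ _

lemma abs_quadForm_le {a : ℕ} (A : Matrix (Fin a) (Fin a) ℝ) (v : Fin a → ℝ) :
    |v ⬝ᵥ A.mulVec v| ≤ spNorm A * euclNorm v ^ 2 := by
  calc |v ⬝ᵥ A.mulVec v| ≤ euclNorm v * euclNorm (A.mulVec v) := abs_dotProduct_le _ _
    _ ≤ euclNorm v * (spNorm A * euclNorm v) :=
        mul_le_mul_of_nonneg_left (euclNorm_mulVec_le A v) (euclNorm_nonneg v)
    _ = spNorm A * euclNorm v ^ 2 := by ring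

lemma quad_value {n p : ℕ} (d : Fin p → Eu n) (hli : LinearIndependent ℝ d)
    (S : Matrix (Fin n) (Fin p) ℝ) (hS : ∀ k i, S k i = d i k)
    (Sp : Matrix (Fin n) (Fin p) ℝ)
    (hSp1 : Sᵀ * Sp * Sᵀ = Sᵀ)
    (c : Fin p → ℝ) (i : Fin p) :
    (fun k => d i k) ⬝ᵥ ((Sp * Matrix.diagonal c * Sᵀ).mulVec fun k => d i k)
      = c i * ‖d i‖ ^ 2 := by
  have hinj : ∀ x : Fin p → ℝ, S.mulVec x = 0 → x = 0 := by
    intro x hx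
    have hsum : ∑ j, x j • d j = 0 := by
      apply PiLp.ext
      intro k
      have : (∑ j, x j • d j) k = ∑ j, x j * d j k := by
        rw [show (∑ j, x j • d j) k = ∑ j, (x j • d j) k from by rw [WithLp.ofLp_sum, Finset.sum_apply]]
        simp [PiLp.smul_apply]
      rw [this]
      have := congrFun hx k
      simpa [Matrix.mulVec, dotProduct, hS, mul_comm] using this
    have := Fintype.linearIndependent_iff.mp hli x hsum
    funext j; exact this j
  have hid : Spᵀ * S = 1 := by
    have htr : S * (Spᵀ * S) = S := by
      have := congrArg Matrix.transpose hSp1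
      simpa [Matrix.transpose_mul, Matrix.transpose_transpose, mul_assoc] using this
    have hmv : ∀ x, (Spᵀ * S).mulVec x = x := by
      intro x
      have h0 : S.mulVec ((Spᵀ * S).mulVec x - x) = 0 := by
        rw [Matrix.mulVec_sub, Matrix.mulVec_mulVec, htr, sub_self]
      exact sub_eq_zero.mp (hinj _ h0)
    ext a b
    have := congrFun (hmv (Pi.single b 1)) a
    simpa [Matrix.mulVec_single, Matrix.one_apply, Pi.single_apply] using this
  set v : Fin n → ℝ := fun k => d i k with hv
  have hvS : v = S.mulVec (Pi.single i 1) := by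
    funext k; simp [Matrix.mulVec_single, hS, hv]
  have h1 : Spᵀ.mulVec v = Pi.single i 1 := by
    rw [hvS, Matrix.mulVec_mulVec, hid, Matrix.one_mulVec]
  calc v ⬝ᵥ (Sp * Matrix.diagonal c * Sᵀ).mulVec v
      = (Spᵀ.mulVec v) ⬝ᵥ (Matrix.diagonal c * Sᵀ).mulVec v := by
        rw [Matrix.mul_assoc, ← Matrix.mulVec_mulVec, Matrix.dotProduct_mulVec,
          ← Matrix.mulVec_transpose]
    _ = Pi.single i 1 ⬝ᵥ (Matrix.diagonal c).mulVec (Sᵀ.mulVec v) := by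
        rw [h1, ← Matrix.mulVec_mulVec]
    _ = c i * (Sᵀ.mulVec v) i := by
        rw [single_dotProduct, one_mul, Matrix.mulVec_diagonal]
    _ = c i * ‖d i‖ ^ 2 := by
        congr 1
        have : (Sᵀ.mulVec v) i = ∑ k, d i k * d i k := by
          simp [Matrix.mulVec, dotProduct, Matrix.transpose_apply, hS, hv]
        rw [this, ← real_inner_self_eq_norm_sq, PiLp.inner_apply]
        simp [RCLike.inner_apply, conj_trivial, sq]

lemma inner_CLM {n : ℕ} (A : Matrix (Fin n) (Fin n) ℝ) (w u : Eu n) :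
    ⟪(Matrix.toEuclideanCLM (𝕜 := ℝ) A) w, u⟫ =
      (fun k => u k) ⬝ᵥ A.mulVec (fun k => w k) := by
  rw [PiLp.inner_apply]
  have hco : ∀ i, ((Matrix.toEuclideanCLM (𝕜 := ℝ) A) w) i = A.mulVec (fun k => w k) i := by
    intro i
    have := congrFun (Matrix.ofLp_toEuclideanCLM (𝕜 := ℝ) A w) i
    exact this
  simp only [RCLike.inner_apply, conj_trivial, hco]
  rw [dotProduct]

lemma taylor_bound {n : ℕ} (f : Eu n → ℝ) (g : Eu n → Eu n)
    (Hf : Eu n → Matrix (Fin n) (Fin n) ℝ) (L : ℝ) (hL : 0 ≤ L)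
    (hgrad : ∀ x, HasGradientAt f (g x) x)
    (hhess : ∀ x, HasFDerivAt g (Matrix.toEuclideanCLM (𝕜 := ℝ) (Hf x)) x)
    (hlip : ∀ x y, spNorm (Hf x - Hf y) ≤ L * ‖x - y‖)
    (x0 v : Eu n) :
    |f (x0 + v) + f (x0 - v) - 2 * f x0 -
        (fun k => v k) ⬝ᵥ (Hf x0).mulVec (fun k => v k)| ≤ L / 3 * ‖v‖ ^ 3 := by
  set vv : Fin n → ℝ := fun k => v k with hvv
  set Q0 : ℝ := vv ⬝ᵥ (Hf x0).mulVec vv with hQ0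
  have hline : ∀ (w : Eu n) (t : ℝ), HasDerivAt (fun s : ℝ => x0 + s • w) w t := by
    intro w t
    simpa using ((hasDerivAt_id t).smul_const w).const_add x0
  have hφ : ∀ (w : Eu n) (t : ℝ),
      HasDerivAt (fun s => f (x0 + s • w)) ⟪g (x0 + t • w), w⟫ t := by
    intro w t
    have h1 := (hgrad (x0 + t • w)).hasFDerivAt
    have h2 := h1.comp_hasDerivAt t (hline w t)
    simpa [InnerProductSpace.toDual_apply_apply, Function.comp_def] using h2
  have hψ : ∀ (w : Eu n) (t : ℝ),
      HasDerivAt (fun s => ⟪g (x0 + s • w), w⟫)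
        ⟪(Matrix.toEuclideanCLM (𝕜 := ℝ) (Hf (x0 + t • w))) w, w⟫ t := by
    intro w t
    have h1 := (hhess (x0 + t • w)).comp_hasDerivAt t (hline w t)
    have h2 := h1.inner ℝ (hasDerivAt_const t w)
    simpa using h2
  -- quadratic forms along line
  have hQval : ∀ (w : Eu n) (t : ℝ),
      ⟪(Matrix.toEuclideanCLM (𝕜 := ℝ) (Hf (x0 + t • w))) w, w⟫ =
        (fun k => w k) ⬝ᵥ (Hf (x0 + t • w)).mulVec (fun k => w k) := by
    intro w t; exact inner_CLM _ _ _
  -- bound on variation of quadratic form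
  have hQbound : ∀ (w : Eu n) (t : ℝ), 0 ≤ t →
      |(fun k => w k) ⬝ᵥ (Hf (x0 + t • w)).mulVec (fun k => w k) -
        (fun k => w k) ⬝ᵥ (Hf x0).mulVec (fun k => w k)| ≤ L * t * ‖w‖ ^ 3 := by
    intro w t ht
    have hsub : (fun k => w k) ⬝ᵥ (Hf (x0 + t • w)).mulVec (fun k => w k) -
        (fun k => w k) ⬝ᵥ (Hf x0).mulVec (fun k => w k) =
        (fun k => w k) ⬝ᵥ (Hf (x0 + t • w) - Hf x0).mulVec (fun k => w k) := by
      rw [Matrix.sub_mulVec, dotProduct_sub]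
    rw [hsub]
    calc |(fun k => w k) ⬝ᵥ (Hf (x0 + t • w) - Hf x0).mulVec (fun k => w k)|
        ≤ spNorm (Hf (x0 + t • w) - Hf x0) * euclNorm (fun k => w k) ^ 2 :=
          abs_quadForm_le _ _
      _ ≤ (L * ‖(x0 + t • w) - x0‖) * euclNorm (fun k => w k) ^ 2 := by
          apply mul_le_mul_of_nonneg_right (hlip _ _) (sq_nonneg _)
      _ = L * t * ‖w‖ ^ 3 := by
          rw [euclNorm_eq_norm, add_sub_cancel_left, norm_smul, Real.norm_eq_abs,
            abs_of_nonneg ht]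
          ring
  have hneg : ∀ M : Matrix (Fin n) (Fin n) ℝ,
      (fun k => (-v : Eu n) k) ⬝ᵥ M.mulVec (fun k => (-v : Eu n) k) = vv ⬝ᵥ M.mulVec vv := by
    intro M
    have hfun : (fun k => (-v : Eu n) k) = -vv := by
      funext k; simp [hvv]
    rw [hfun, neg_dotProduct, Matrix.mulVec_neg, dotProduct_neg, neg_neg]
  set G : ℝ → ℝ := fun t => ⟪g (x0 + t • v), v⟫ + ⟪g (x0 + t • (-v)), (-v : Eu n)⟫
      - Q0 * 2 * t with hGdef
  set F : ℝ → ℝ := fun t => f (x0 + t • v) + f (x0 + t • (-v)) - 2 * f x0 - Q0 * t ^ 2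
    with hFdef
  have hG : ∀ t, HasDerivAt G (vv ⬝ᵥ (Hf (x0 + t • v)).mulVec vv
      + vv ⬝ᵥ (Hf (x0 + t • (-v))).mulVec vv - Q0 * 2) t := by
    intro t
    have e1 := hQval v t
    have e2 : ⟪(Matrix.toEuclideanCLM (𝕜 := ℝ) (Hf (x0 + t • (-v)))) (-v), (-v : Eu n)⟫
        = vv ⬝ᵥ (Hf (x0 + t • (-v))).mulVec vv := by
      rw [hQval (-v) t, hneg]
    have h1 := ((hψ v t).add (hψ (-v) t)).sub ((hasDerivAt_id t).const_mul (Q0 * 2))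
    have h2 : HasDerivAt G (⟪(Matrix.toEuclideanCLM (𝕜 := ℝ) (Hf (x0 + t • v))) v, v⟫
        + ⟪(Matrix.toEuclideanCLM (𝕜 := ℝ) (Hf (x0 + t • (-v)))) (-v), (-v : Eu n)⟫
        - Q0 * 2 * 1) t := h1
    rw [e1, e2, mul_one] at h2
    exact h2
  have hF : ∀ t, HasDerivAt F (G t) t := by
    intro t
    have h1 := (((hφ v t).add (hφ (-v) t)).sub_const (2 * f x0)).sub
      ((hasDerivAt_pow 2 t).const_mul Q0)
    have h2 : HasDerivAt F (⟪g (x0 + t • v), v⟫ + ⟪g (x0 + t • (-v)), (-v : Eu n)⟫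
        - Q0 * ((2 : ℕ) * t ^ (2 - 1))) t := h1
    have h3 : ⟪g (x0 + t • v), v⟫ + ⟪g (x0 + t • (-v)), (-v : Eu n)⟫
        - Q0 * ((2 : ℕ) * t ^ (2 - 1)) = G t := by
      simp only [hGdef]
      push_cast
      ring
    rw [h3] at h2
    exact h2
  have hGcont : ContinuousOn G (Set.Icc 0 1) :=
    (Differentiable.continuous fun t => (hG t).differentiableAt).continuousOn
  have hFcont : ContinuousOn F (Set.Icc 0 1) :=
    (Differentiable.continuous fun t => (hF t).differentiableAt).continuousOn
  have hG0 : G 0 = 0 := by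
    simp [hGdef, inner_neg_right]
  have hF0 : F 0 = 0 := by
    simp [hFdef]
    ring
  have fence1 : ∀ x ∈ Set.Icc (0:ℝ) 1, ‖G x‖ ≤ L * ‖v‖ ^ 3 * x ^ 2 := by
    have := image_norm_le_of_norm_deriv_right_le_deriv_boundary hGcont
      (fun x _ => (hG x).hasDerivWithinAt)
      (B := fun t => L * ‖v‖ ^ 3 * t ^ 2) (B' := fun t => L * ‖v‖ ^ 3 * (2 * t))
      (by simp [hG0]) (fun x => by
        have h := (hasDerivAt_pow 2 x).const_mul (L * ‖v‖ ^ 3)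
        refine h.congr_deriv ?_
        push_cast; ring)
      ?_
    · exact fun x hx => this hx
    · intro x hx
      have h1 := hQbound v x hx.1
      have h2' := hQbound (-v) x hx.1
      rw [hneg, hneg, norm_neg] at h2'
      rw [Real.norm_eq_abs]
      have heq : vv ⬝ᵥ (Hf (x0 + x • v)).mulVec vv + vv ⬝ᵥ (Hf (x0 + x • (-v))).mulVec vv
          - Q0 * 2
          = (vv ⬝ᵥ (Hf (x0 + x • v)).mulVec vv - Q0)
            + (vv ⬝ᵥ (Hf (x0 + x • (-v))).mulVec vv - Q0) := by ring
      rw [heq]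
      calc |_ + _| ≤ _ := abs_add_le _ _
        _ ≤ L * x * ‖v‖ ^ 3 + L * x * ‖v‖ ^ 3 := add_le_add h1 h2'
        _ = L * ‖v‖ ^ 3 * (2 * x) := by ring
  have fence2 : ∀ x ∈ Set.Icc (0:ℝ) 1, ‖F x‖ ≤ L * ‖v‖ ^ 3 / 3 * x ^ 3 := by
    have := image_norm_le_of_norm_deriv_right_le_deriv_boundary hFcont
      (fun x _ => (hF x).hasDerivWithinAt)
      (B := fun t => L * ‖v‖ ^ 3 / 3 * t ^ 3) (B' := fun t => L * ‖v‖ ^ 3 * t ^ 2)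
      (by simp [hF0]) (fun x => by
        have h := (hasDerivAt_pow 3 x).const_mul (L * ‖v‖ ^ 3 / 3)
        refine h.congr_deriv ?_
        push_cast; ring)
      (fun x hx => fence1 x (Set.mem_Icc_of_Ico hx))
    exact fun x hx => this hx
  have hfinal := fence2 1 (by norm_num)
  have hF1 : F 1 = f (x0 + v) + f (x0 - v) - 2 * f x0 - Q0 := by
    simp only [hFdef, one_smul, one_pow, mul_one]
    rw [sub_eq_add_neg x0 v]
  rw [hF1, Real.norm_eq_abs] at hfinal
  calc |f (x0 + v) + f (x0 - v) - 2 * f x0 - vv ⬝ᵥ (Hf x0).mulVec vv|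
      = |f (x0 + v) + f (x0 - v) - 2 * f x0 - Q0| := by rw [hQ0]
    _ ≤ L * ‖v‖ ^ 3 / 3 * 1 ^ 3 := hfinal
    _ = L / 3 * ‖v‖ ^ 3 := by ring

theorem stmt_11 {n p : ℕ} (f : Eu n → ℝ) (g : Eu n → Eu n)
    (Hf : Eu n → Matrix (Fin n) (Fin n) ℝ) (L : ℝ) (hL : 0 ≤ L)
    (hgrad : ∀ x, HasGradientAt f (g x) x)
    (hhess : ∀ x, HasFDerivAt g (Matrix.toEuclideanCLM (𝕜 := ℝ) (Hf x)) x)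
    (hlip : ∀ x y, spNorm (Hf x - Hf y) ≤ L * ‖x - y‖)
    (x0 : Eu n) (d : Fin p → Eu n) (hd : ∀ i, d i ≠ 0)
    (hli : LinearIndependent ℝ d)
    (S : Matrix (Fin n) (Fin p) ℝ) (hS : ∀ k i, S k i = d i k)
    (Sp : Matrix (Fin n) (Fin p) ℝ) (hSp : IsMP Sᵀ Sp)
    (c : Fin p → ℝ)
    (hc : ∀ i, c i = (f (x0 + d i) + f (x0 - d i) - 2 * f x0) / ‖d i‖ ^ 2)
    (H : Matrix (Fin n) (Fin n) ℝ) (hH : H = Sp * Matrix.diagonal c * Sᵀ)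
    (i : Fin p) :
    |(‖d i‖⁻¹ • d i) ⬝ᵥ (H - Hf x0).mulVec (‖d i‖⁻¹ • d i)|
      ≤ L / 3 * ⨆ j, ‖d j‖ := by
  have hvne : ‖d i‖ ≠ 0 := norm_ne_zero_iff.mpr (hd i)
  have hvpos : (0:ℝ) < ‖d i‖ := norm_pos_iff.mpr (hd i)
  set vv : Fin n → ℝ := fun k => d i k with hvv
  have hquad : vv ⬝ᵥ H.mulVec vv = c i * ‖d i‖ ^ 2 := by
    rw [hH]; exact quad_value d hli S hS Sp hSp.1 c i
  have hdiff : vv ⬝ᵥ (H - Hf x0).mulVec vv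
      = (f (x0 + d i) + f (x0 - d i) - 2 * f x0) - vv ⬝ᵥ (Hf x0).mulVec vv := by
    rw [Matrix.sub_mulVec, dotProduct_sub, hquad, hc i]
    field_simp
  have htay := taylor_bound f g Hf L hL hgrad hhess hlip x0 (d i)
  rw [← hdiff] at htay
  have hshow : |(‖d i‖⁻¹ • d i) ⬝ᵥ (H - Hf x0).mulVec (‖d i‖⁻¹ • d i)|
      = |(‖d i‖⁻¹ • vv) ⬝ᵥ (H - Hf x0).mulVec (‖d i‖⁻¹ • vv)| := by
    congr 2 <;> funext k <;> simp [hvv]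
  rw [hshow, smul_dotProduct, Matrix.mulVec_smul, dotProduct_smul,
    smul_eq_mul, smul_eq_mul, abs_mul, abs_mul,
    abs_of_nonneg (inv_nonneg.mpr (norm_nonneg (d i)))]
  have hstep : ‖d i‖⁻¹ * (‖d i‖⁻¹ * |vv ⬝ᵥ (H - Hf x0).mulVec vv|)
      ≤ ‖d i‖⁻¹ * (‖d i‖⁻¹ * (L / 3 * ‖d i‖ ^ 3)) := by
    apply mul_le_mul_of_nonneg_left _ (inv_nonneg.mpr (norm_nonneg (d i)))
    exact mul_le_mul_of_nonneg_left htay (inv_nonneg.mpr (norm_nonneg (d i)))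
  have heq : ‖d i‖⁻¹ * (‖d i‖⁻¹ * (L / 3 * ‖d i‖ ^ 3)) = L / 3 * ‖d i‖ := by
    field_simp
  have hsup : ‖d i‖ ≤ ⨆ j, ‖d j‖ :=
    le_ciSup (f := fun j => ‖d j‖) (Set.Finite.bddAbove (Set.finite_range _)) i
  calc ‖d i‖⁻¹ * (‖d i‖⁻¹ * |vv ⬝ᵥ (H - Hf x0).mulVec vv|)
      ≤ L / 3 * ‖d i‖ := by rw [← heq]; exact hstep
    _ ≤ L / 3 * ⨆ j, ‖d j‖ :=
        mul_le_mul_of_nonneg_left hsup (by positivity)
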